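/- Let the even generalized eigenfunction for λ ∈ 𝒞₊ = [iω, i∞) be τ₊(x) = (conj(D) e^{ik₊|x|} - D e^{-ik₊|x|}) v₊ + 4βik₊ e^{ik₋|x|} v₋, where D = (2ik₊+α)(2ik₋+α) - β², v₊ = (1,i), v₋ = (1,-i), k₊ real and k₋ purely imaginary with Im k₋ > 0. Then τ₊ satisfies, in the distributional sense, the jump condition τ₊'(0+) - τ₊'(0-) = -M τ₊(0) with M = diag(α+β, α-β), and solves the homogeneous system (-λ, -∂² + ω; ∂² - ω, -λ)τ₊ = 0 for x ≠ 0, i.e., it is a generalized eigenfunction of the linearized operator with eigenvalue λ. -/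

import Mathlib

open Real Filter Topology

/-- `w = (w₁,w₂)` is a generalized eigenfunction with spectral parameter `lam`
of the linearized operator: it is continuous, solves the homogeneous system
`-lam w₁ + (-w₂'' + ω w₂) = 0`, `(w₁'' - ω w₁) - lam w₂ = 0` for `x ≠ 0`, and at
the origin the derivatives have one-sided limits with jumps
`wᵢ'(0+) - wᵢ'(0-) = -mᵢ wᵢ(0)`, where `M = diag(m₁, m₂)`. -/
def IsGenEigenfunction (ω : ℝ) (m₁ m₂ : ℝ) (lam : ℂ) (w₁ w₂ : ℝ → ℂ) : Prop :=
  Continuous w₁ ∧ Continuous w₂ ∧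
  (∀ x : ℝ, x ≠ 0 →
    DifferentiableAt ℝ w₁ x ∧ DifferentiableAt ℝ (deriv w₁) x ∧
    DifferentiableAt ℝ w₂ x ∧ DifferentiableAt ℝ (deriv w₂) x ∧
    -lam * w₁ x + (-(deriv (deriv w₂) x) + (ω : ℂ) * w₂ x) = 0 ∧
    (deriv (deriv w₁) x - (ω : ℂ) * w₁ x) - lam * w₂ x = 0) ∧
  (∃ d₁p d₁m d₂p d₂m : ℂ,
    Tendsto (deriv w₁) (𝓝[>] (0:ℝ)) (𝓝 d₁p) ∧
    Tendsto (deriv w₁) (𝓝[<] (0:ℝ)) (𝓝 d₁m) ∧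
    Tendsto (deriv w₂) (𝓝[>] (0:ℝ)) (𝓝 d₂p) ∧
    Tendsto (deriv w₂) (𝓝[<] (0:ℝ)) (𝓝 d₂m) ∧
    d₁p - d₁m = -((m₁ : ℂ) * w₁ 0) ∧ d₂p - d₂m = -((m₂ : ℂ) * w₂ 0))

lemma hde_aux (A c : ℂ) (t : ℝ) :
    HasDerivAt (fun t : ℝ => A * Complex.exp (c * t)) (A * c * Complex.exp (c * t)) t := by
  have h1 : HasDerivAt (fun t : ℝ => (t : ℂ)) 1 t := by
    have h0 := Complex.ofRealCLM.hasDerivAt (x := t)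
    simp at h0
    exact h0
  have h2 : HasDerivAt (fun t : ℝ => c * (t : ℂ)) c t := by simpa using h1.const_mul c
  have h3 := h2.cexp
  simpa [mul_comm, mul_assoc, mul_left_comm] using h3.const_mul A

lemma abs_master (F F' F'' : ℝ → ℂ) (hF : ∀ t, HasDerivAt F (F' t) t)
    (hF' : ∀ t, HasDerivAt F' (F'' t) t) :
    Continuous (fun x : ℝ => F |x|) ∧
    (∀ x : ℝ, x ≠ 0 → DifferentiableAt ℝ (fun y : ℝ => F |y|) x ∧
      DifferentiableAt ℝ (deriv (fun y : ℝ => F |y|)) x ∧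
      deriv (deriv (fun y : ℝ => F |y|)) x = F'' |x|) ∧
    Tendsto (deriv (fun y : ℝ => F |y|)) (𝓝[>] (0:ℝ)) (𝓝 (F' 0)) ∧
    Tendsto (deriv (fun y : ℝ => F |y|)) (𝓝[<] (0:ℝ)) (𝓝 (-(F' 0))) := by
  have hpos : ∀ x : ℝ, 0 < x → (fun y : ℝ => F |y|) =ᶠ[𝓝 x] F := by
    intro x hx
    filter_upwards [Ioi_mem_nhds hx] with y hy
    rw [abs_of_pos hy]
  have hneg : ∀ x : ℝ, x < 0 → (fun y : ℝ => F |y|) =ᶠ[𝓝 x] (fun y => F (-y)) := by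
    intro x hx
    filter_upwards [Iio_mem_nhds hx] with y hy
    rw [abs_of_neg hy]
  have hFm : ∀ t : ℝ, HasDerivAt (fun y : ℝ => F (-y)) (-(F' (-t))) t := by
    intro t
    have := (hF (-t)).scomp t (hasDerivAt_neg t)
    simp at this
    exact this
  have hF'm : ∀ t : ℝ, HasDerivAt (fun y : ℝ => -(F' (-y))) (F'' (-t)) t := by
    intro t
    have := ((hF' (-t)).scomp t (hasDerivAt_neg t)).neg
    simp at this
    exact this
  have hdpos : ∀ x : ℝ, 0 < x → deriv (fun y : ℝ => F |y|) x = F' x := by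
    intro x hx
    rw [(hpos x hx).deriv_eq, (hF x).deriv]
  have hdneg : ∀ x : ℝ, x < 0 → deriv (fun y : ℝ => F |y|) x = -(F' (-x)) := by
    intro x hx
    rw [(hneg x hx).deriv_eq, (hFm x).deriv]
  have hdF' : Differentiable ℝ F' := fun t => (hF' t).differentiableAt
  have hcF' : Continuous F' := hdF'.continuous
  refine ⟨?_, ?_, ?_, ?_⟩
  · have hdF : Differentiable ℝ F := fun t => (hF t).differentiableAt
    exact hdF.continuous.comp continuous_abs
  · intro x hx
    rcases hx.lt_or_gt with h | h
    · have hd1 : DifferentiableAt ℝ (fun y : ℝ => F |y|) x :=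
        ((hFm x).congr_of_eventuallyEq (hneg x h)).differentiableAt
      have hev : deriv (fun y : ℝ => F |y|) =ᶠ[𝓝 x] (fun y => -(F' (-y))) := by
        filter_upwards [Iio_mem_nhds h] with y hy
        exact hdneg y hy
      have hd2 : DifferentiableAt ℝ (deriv (fun y : ℝ => F |y|)) x :=
        ((hF'm x).congr_of_eventuallyEq hev).differentiableAt
      refine ⟨hd1, hd2, ?_⟩
      rw [hev.deriv_eq, (hF'm x).deriv, abs_of_neg h]
    · have hd1 : DifferentiableAt ℝ (fun y : ℝ => F |y|) x :=
        ((hF x).congr_of_eventuallyEq (hpos x h)).differentiableAt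
      have hev : deriv (fun y : ℝ => F |y|) =ᶠ[𝓝 x] F' := by
        filter_upwards [Ioi_mem_nhds h] with y hy
        exact hdpos y hy
      have hd2 : DifferentiableAt ℝ (deriv (fun y : ℝ => F |y|)) x :=
        ((hF' x).congr_of_eventuallyEq hev).differentiableAt
      refine ⟨hd1, hd2, ?_⟩
      rw [hev.deriv_eq, (hF' x).deriv, abs_of_pos h]
  · have hev : deriv (fun y : ℝ => F |y|) =ᶠ[𝓝[>] (0:ℝ)] F' := by
      filter_upwards [self_mem_nhdsWithin] with y hy
      exact hdpos y hy
    have ht : Tendsto F' (𝓝[>] (0:ℝ)) (𝓝 (F' 0)) :=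
      (hcF'.tendsto 0).mono_left nhdsWithin_le_nhds
    exact ht.congr' hev.symm
  · have hev : deriv (fun y : ℝ => F |y|) =ᶠ[𝓝[<] (0:ℝ)] (fun y => -(F' (-y))) := by
      filter_upwards [self_mem_nhdsWithin] with y hy
      exact hdneg y hy
    have ht : Tendsto (fun y : ℝ => -(F' (-y))) (𝓝[<] (0:ℝ)) (𝓝 (-(F' 0))) := by
      have : Tendsto (fun y : ℝ => -(F' (-y))) (𝓝 (0:ℝ)) (𝓝 (-(F' (-0)))) :=
        ((hcF'.comp continuous_neg).neg.tendsto 0)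
      simpa using this.mono_left nhdsWithin_le_nhds
    exact ht.congr' hev.symm

lemma triple_master (A B C c1 c2 c3 : ℂ) :
    Continuous (fun x : ℝ => A * Complex.exp (c1 * |x|) + B * Complex.exp (c2 * |x|)
      + C * Complex.exp (c3 * |x|)) ∧
    (∀ x : ℝ, x ≠ 0 →
      DifferentiableAt ℝ (fun y : ℝ => A * Complex.exp (c1 * |y|) + B * Complex.exp (c2 * |y|)
        + C * Complex.exp (c3 * |y|)) x ∧
      DifferentiableAt ℝ (deriv (fun y : ℝ => A * Complex.exp (c1 * |y|)
        + B * Complex.exp (c2 * |y|) + C * Complex.exp (c3 * |y|))) x ∧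
      deriv (deriv (fun y : ℝ => A * Complex.exp (c1 * |y|) + B * Complex.exp (c2 * |y|)
        + C * Complex.exp (c3 * |y|))) x
        = A * c1 ^ 2 * Complex.exp (c1 * |x|) + B * c2 ^ 2 * Complex.exp (c2 * |x|)
          + C * c3 ^ 2 * Complex.exp (c3 * |x|)) ∧
    Tendsto (deriv (fun y : ℝ => A * Complex.exp (c1 * |y|) + B * Complex.exp (c2 * |y|)
      + C * Complex.exp (c3 * |y|))) (𝓝[>] (0:ℝ)) (𝓝 (A * c1 + B * c2 + C * c3)) ∧
    Tendsto (deriv (fun y : ℝ => A * Complex.exp (c1 * |y|) + B * Complex.exp (c2 * |y|)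
      + C * Complex.exp (c3 * |y|))) (𝓝[<] (0:ℝ)) (𝓝 (-(A * c1 + B * c2 + C * c3))) := by
  have hF : ∀ t : ℝ, HasDerivAt
      (fun t : ℝ => A * Complex.exp (c1 * t) + B * Complex.exp (c2 * t) + C * Complex.exp (c3 * t))
      (A * c1 * Complex.exp (c1 * t) + B * c2 * Complex.exp (c2 * t)
        + C * c3 * Complex.exp (c3 * t)) t :=
    fun t => ((hde_aux A c1 t).add (hde_aux B c2 t)).add (hde_aux C c3 t)
  have hF' : ∀ t : ℝ, HasDerivAt
      (fun t : ℝ => A * c1 * Complex.exp (c1 * t) + B * c2 * Complex.exp (c2 * t)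
        + C * c3 * Complex.exp (c3 * t))
      (A * c1 ^ 2 * Complex.exp (c1 * t) + B * c2 ^ 2 * Complex.exp (c2 * t)
        + C * c3 ^ 2 * Complex.exp (c3 * t)) t := by
    intro t
    have h := ((hde_aux (A * c1) c1 t).add (hde_aux (B * c2) c2 t)).add (hde_aux (C * c3) c3 t)
    have hval : A * c1 * c1 * Complex.exp (c1 * t) + B * c2 * c2 * Complex.exp (c2 * t)
        + C * c3 * c3 * Complex.exp (c3 * t)
        = A * c1 ^ 2 * Complex.exp (c1 * t) + B * c2 ^ 2 * Complex.exp (c2 * t)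
          + C * c3 ^ 2 * Complex.exp (c3 * t) := by ring
    exact hval ▸ h
  obtain ⟨h1, h2, h3, h4⟩ := abs_master _ _ _ hF hF'
  refine ⟨h1, h2, ?_, ?_⟩
  · simpa using h3
  · simpa using h4

/-- for `λ = iν ∈ 𝒞₊` (`ν > ω`), the even function
`τ₊(x) = (conj(D) e^{ik₊|x|} - D e^{-ik₊|x|}) v₊ + 4βik₊ e^{ik₋|x|} v₋`, with
`v₊ = (1,i)`, `v₋ = (1,-i)`, `k₊ = √(ν-ω) > 0`, `k₋ = i√(ν+ω)`, and
`D = (2ik₊+α)(2ik₋+α) - β²`, is a generalized eigenfunction of the linearized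
operator with eigenvalue `λ`, satisfying the jump condition with
`M = diag(α+β, α-β)`. -/
theorem even_generalized_eigenfunction
    (a β ν : ℝ) (ha : 0 < a) (hν : a ^ 2 / 4 < ν) :
    let ω : ℝ := a ^ 2 / 4
    let α : ℝ := a + β
    let kp : ℂ := (Real.sqrt (ν - ω) : ℝ)
    let km : ℂ := Complex.I * (Real.sqrt (ν + ω) : ℝ)
    let D : ℂ := (2 * Complex.I * kp + (α : ℂ)) * (2 * Complex.I * km + (α : ℂ)) - (β : ℂ) ^ 2
    let τ₁ : ℝ → ℂ := fun x =>
      (starRingEnd ℂ D) * Complex.exp (Complex.I * kp * |x|)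
        - D * Complex.exp (-(Complex.I * kp * |x|))
        + 4 * (β : ℂ) * Complex.I * kp * Complex.exp (Complex.I * km * |x|)
    let τ₂ : ℝ → ℂ := fun x =>
      Complex.I * ((starRingEnd ℂ D) * Complex.exp (Complex.I * kp * |x|)
        - D * Complex.exp (-(Complex.I * kp * |x|)))
        - Complex.I * (4 * (β : ℂ) * Complex.I * kp * Complex.exp (Complex.I * km * |x|))
    IsGenEigenfunction ω (α + β) (α - β) (Complex.I * (ν : ℂ)) τ₁ τ₂ := by
  intro ω α kp km D τ₁ τ₂
  have hω : ω = a ^ 2 / 4 := rfl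
  have hkp : kp = ((Real.sqrt (ν - ω) : ℝ) : ℂ) := rfl
  have hkm : km = Complex.I * ((Real.sqrt (ν + ω) : ℝ) : ℂ) := rfl
  have hD : D = (2 * Complex.I * kp + (α : ℂ)) * (2 * Complex.I * km + (α : ℂ)) - (β : ℂ) ^ 2 := rfl
  have hτ₁b : τ₁ = fun x : ℝ =>
      (starRingEnd ℂ D) * Complex.exp (Complex.I * kp * |x|)
        - D * Complex.exp (-(Complex.I * kp * |x|))
        + 4 * (β : ℂ) * Complex.I * kp * Complex.exp (Complex.I * km * |x|) := rfl
  have hτ₂b : τ₂ = fun x : ℝ =>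
      Complex.I * ((starRingEnd ℂ D) * Complex.exp (Complex.I * kp * |x|)
        - D * Complex.exp (-(Complex.I * kp * |x|)))
        - Complex.I * (4 * (β : ℂ) * Complex.I * kp * Complex.exp (Complex.I * km * |x|)) := rfl
  -- basic inequalities
  have hge1 : (0:ℝ) ≤ ν - ω := by
    have : ω < ν := hν
    linarith
  have hge2 : (0:ℝ) ≤ ν + ω := by
    have h1 : ω < ν := hν
    have h2 : (0:ℝ) ≤ ω := by rw [hω]; positivity
    linarith
  -- square relations
  have hkp2 : kp ^ 2 = (ν : ℂ) - (ω : ℂ) := by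
    rw [hkp, ← Complex.ofReal_pow, Real.sq_sqrt hge1, Complex.ofReal_sub]
  have hkm2 : km ^ 2 = -((ν : ℂ) + (ω : ℂ)) := by
    rw [hkm, mul_pow, Complex.I_sq, ← Complex.ofReal_pow, Real.sq_sqrt hge2, Complex.ofReal_add]
    ring
  -- conjugate of D
  have hckp : (starRingEnd ℂ) kp = kp := by rw [hkp]; exact Complex.conj_ofReal _
  have hckm : (starRingEnd ℂ) km = -km := by
    rw [hkm]
    simp [map_mul, Complex.conj_I, Complex.conj_ofReal]
  have hconj : (starRingEnd ℂ) D
      = ((α : ℂ) - 2 * Complex.I * kp) * (2 * Complex.I * km + (α : ℂ)) - (β : ℂ) ^ 2 := by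
    rw [hD]
    simp only [map_sub, map_mul, map_add, map_pow, map_ofNat, Complex.conj_I,
      Complex.conj_ofReal, hckp, hckm]
    ring
  -- canonical forms
  have hτ₁ : τ₁ = fun x : ℝ =>
      (starRingEnd ℂ D) * Complex.exp (Complex.I * kp * |x|)
        + (-D) * Complex.exp ((-(Complex.I * kp)) * |x|)
        + (4 * (β : ℂ) * Complex.I * kp) * Complex.exp (Complex.I * km * |x|) := by
    rw [hτ₁b]; funext x; simp only [neg_mul]; ring
  have hτ₂ : τ₂ = fun x : ℝ =>
      (Complex.I * (starRingEnd ℂ D)) * Complex.exp (Complex.I * kp * |x|)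
        + (-(Complex.I * D)) * Complex.exp ((-(Complex.I * kp)) * |x|)
        + (-(Complex.I * (4 * (β : ℂ) * Complex.I * kp))) * Complex.exp (Complex.I * km * |x|) := by
    rw [hτ₂b]; funext x; simp only [neg_mul]; ring
  have h1 := triple_master ((starRingEnd ℂ) D) (-D) (4 * (β : ℂ) * Complex.I * kp)
    (Complex.I * kp) (-(Complex.I * kp)) (Complex.I * km)
  have h2 := triple_master (Complex.I * (starRingEnd ℂ) D) (-(Complex.I * D))
    (-(Complex.I * (4 * (β : ℂ) * Complex.I * kp)))
    (Complex.I * kp) (-(Complex.I * kp)) (Complex.I * km)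
  refine ⟨?_, ?_, ?_, ?_⟩
  · rw [hτ₁]; exact h1.1
  · rw [hτ₂]; exact h2.1
  · intro x hx
    rw [hτ₁, hτ₂]
    obtain ⟨hd1, hd2, hdd1⟩ := h1.2.1 x hx
    obtain ⟨hd3, hd4, hdd2⟩ := h2.2.1 x hx
    refine ⟨hd1, hd2, hd3, hd4, ?_, ?_⟩
    · rw [hdd2]
      dsimp only
      linear_combination
        (-(Complex.I * (starRingEnd ℂ D) * kp ^ 2) * Complex.exp (Complex.I * kp * |x|)
          + Complex.I * D * kp ^ 2 * Complex.exp ((-(Complex.I * kp)) * |x|)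
          + Complex.I * (4 * (β : ℂ) * Complex.I * kp) * km ^ 2
            * Complex.exp (Complex.I * km * |x|)) * Complex.I_sq
        + (Complex.I * (starRingEnd ℂ D) * Complex.exp (Complex.I * kp * |x|)
          - Complex.I * D * Complex.exp ((-(Complex.I * kp)) * |x|)) * hkp2
        + (-(Complex.I * (4 * (β : ℂ) * Complex.I * kp))
            * Complex.exp (Complex.I * km * |x|)) * hkm2
    · rw [hdd1]
      dsimp only
      linear_combination
        (((starRingEnd ℂ D) * kp ^ 2 - (ν : ℂ) * (starRingEnd ℂ D))
            * Complex.exp (Complex.I * kp * |x|)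
          + (-(D * kp ^ 2) + (ν : ℂ) * D) * Complex.exp ((-(Complex.I * kp)) * |x|)
          + ((4 * (β : ℂ) * Complex.I * kp) * km ^ 2 + (ν : ℂ) * (4 * (β : ℂ) * Complex.I * kp))
            * Complex.exp (Complex.I * km * |x|)) * Complex.I_sq
        + (-(starRingEnd ℂ D) * Complex.exp (Complex.I * kp * |x|)
          + D * Complex.exp ((-(Complex.I * kp)) * |x|)) * hkp2
        + (-(4 * (β : ℂ) * Complex.I * kp) * Complex.exp (Complex.I * km * |x|)) * hkm2
  · rw [hτ₁, hτ₂]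
    refine ⟨_, _, _, _, h1.2.2.1, h1.2.2.2, h2.2.2.1, h2.2.2.2, ?_, ?_⟩
    · simp only [abs_zero, Complex.ofReal_zero, mul_zero, Complex.exp_zero, mul_one]
      rw [hconj, hD]
      push_cast
      ring
    · simp only [abs_zero, Complex.ofReal_zero, mul_zero, Complex.exp_zero, mul_one]
      rw [hconj, hD]
      push_cast
      ring
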